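/- On a board of isolated stacks of heights one and two where every group has two or four tiles, the board is solvable (all tiles removable) if and only if no blocked cycle is present. -/

import Mathlib

/-- A board is a finite multiset of isolated stacks; each stack is a list of
tile groups, with the head of the list being the top tile of the stack. -/
abbrev Board (G : Type*) := Multiset (List G)

variable {G : Type*} [DecidableEq G]

/-- The number of tiles of group `g` remaining on the board. -/
def tileCount (B : Board G) (g : G) : ℕ := (B.map (fun s => s.count g)).sum

/-- The total number of tiles on the board. -/
def totalTiles (B : Board G) : ℕ := (B.map List.length).sum

/-- The board obtained by removing the (playable) top tiles of stacks `s₁` and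
`s₂`, the remaining stacks being `rest`; emptied stacks disappear. -/
def play (s₁ s₂ : List G) (rest : Board G) : Board G :=
  Multiset.filter (fun s => s ≠ []) (s₁.tail ::ₘ s₂.tail ::ₘ rest)

/-- A legal move: remove two playable (top) tiles of the same group. -/
def Move (B B' : Board G) : Prop :=
  ∃ (g : G) (s₁ s₂ : List G) (rest : Board G),
    B = s₁ ::ₘ s₂ ::ₘ rest ∧ s₁.head? = some g ∧ s₂.head? = some g ∧
    B' = play s₁ s₂ rest

/-- A board is solvable iff some sequence of legal moves empties it. -/
def Solvable (B : Board G) : Prop := Relation.ReflTransGen Move B 0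

/-- All stacks are nonempty and of height at most two. -/
def HeightsOK (B : Board G) : Prop := ∀ s ∈ B, s ≠ [] ∧ s.length ≤ 2

/-- A blocked cycle: distinct groups `p 0, …, p k`, each with exactly two
remaining tiles, such that for each `i` there is a height-two stack with a
`p (i+1)`-tile (cyclically) on top of a `p i`-tile. -/
def BlockedCycle (B : Board G) {k : ℕ} (p : Fin (k + 1) → G) : Prop :=
  Function.Injective p ∧ (∀ i, tileCount B (p i) = 2) ∧
    ∀ i, [p (i + 1), p i] ∈ B

/-- The board contains some blocked cycle. -/
def HasBlockedCycle (B : Board G) : Prop :=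
  ∃ (k : ℕ) (p : Fin (k + 1) → G), BlockedCycle B p

set_option linter.unusedSectionVars false

-- helpers
lemma tileCount_add (A C : Board G) (g : G) :
    tileCount (A + C) g = tileCount A g + tileCount C g := by simp [tileCount]

lemma tileCount_cons (s : List G) (B : Board G) (g : G) :
    tileCount (s ::ₘ B) g = s.count g + tileCount B g := by simp [tileCount]

lemma tileCount_le_of_le {A B : Board G} (h : A ≤ B) (g : G) :
    tileCount A g ≤ tileCount B g := by
  obtain ⟨C, rfl⟩ := Multiset.le_iff_exists_add.mp h
  simp [tileCount_add]

lemma count_le_tileCount {s : List G} {B : Board G} (h : s ∈ B) (g : G) :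
    s.count g ≤ tileCount B g := by
  have h2 := tileCount_le_of_le (Multiset.singleton_le.mpr h) g
  simpa [tileCount] using h2

lemma pair_le {B : Board G} {s u : List G} (hs : s ∈ B) (hu : u ∈ B) (hne : s ≠ u) :
    ({s, u} : Board G) ≤ B := by
  have hu' : u ∈ B.erase s := Multiset.mem_erase_of_ne (fun h => hne h.symm) |>.mpr hu
  calc ({s, u} : Board G) = s ::ₘ ({u} : Board G) := rfl
    _ ≤ s ::ₘ B.erase s := Multiset.cons_le_cons _ (Multiset.singleton_le.mpr hu')
    _ = B := Multiset.cons_erase hs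

lemma triple_le {B : Board G} {s u v : List G} (hs : s ∈ B) (hu : u ∈ B) (hv : v ∈ B)
    (h1 : s ≠ u) (h2 : s ≠ v) (h3 : u ≠ v) : ({s, u, v} : Board G) ≤ B := by
  have hu' : u ∈ B.erase s := Multiset.mem_erase_of_ne (fun h => h1 h.symm) |>.mpr hu
  have hv' : v ∈ (B.erase s).erase u := by
    refine Multiset.mem_erase_of_ne (fun h => h3 h.symm) |>.mpr ?_
    exact Multiset.mem_erase_of_ne (fun h => h2 h.symm) |>.mpr hv
  calc ({s, u, v} : Board G) = s ::ₘ u ::ₘ ({v} : Board G) := rfl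
    _ ≤ s ::ₘ u ::ₘ (B.erase s).erase u := by
        exact Multiset.cons_le_cons _ (Multiset.cons_le_cons _ (Multiset.singleton_le.mpr hv'))
    _ = s ::ₘ B.erase s := by rw [Multiset.cons_erase hu']
    _ = B := Multiset.cons_erase hs

lemma tileCount_triple {B : Board G} {s u v : List G} (hs : s ∈ B) (hu : u ∈ B) (hv : v ∈ B)
    (h1 : s ≠ u) (h2 : s ≠ v) (h3 : u ≠ v) (g : G) :
    s.count g + u.count g + v.count g ≤ tileCount B g := by
  have := tileCount_le_of_le (triple_le hs hu hv h1 h2 h3) g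
  simpa [tileCount, add_assoc] using this

lemma tileCount_pair {B : Board G} {s u : List G} (hs : s ∈ B) (hu : u ∈ B)
    (h1 : s ≠ u) (g : G) : s.count g + u.count g ≤ tileCount B g := by
  have := tileCount_le_of_le (pair_le hs hu h1) g
  simpa [tileCount] using this

lemma tileCount_filter_ne_nil (M : Board G) (q : G) :
    tileCount (M.filter (fun s => s ≠ [])) q = tileCount M q := by
  induction M using Multiset.induction with
  | empty => simp [tileCount]
  | cons s M ih =>
    by_cases h : s = []
    · subst h; simp [Multiset.filter_cons, tileCount_cons, ih]
    · simp [Multiset.filter_cons, h, tileCount_cons, ih, tileCount_add]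

lemma totalTiles_add (A C : Board G) :
    totalTiles (A + C) = totalTiles A + totalTiles C := by simp [totalTiles]

lemma totalTiles_cons (s : List G) (B : Board G) :
    totalTiles (s ::ₘ B) = s.length + totalTiles B := by simp [totalTiles]

lemma totalTiles_filter_ne_nil (M : Board G) :
    totalTiles (M.filter (fun s => s ≠ [])) = totalTiles M := by
  induction M using Multiset.induction with
  | empty => simp [totalTiles]
  | cons s M ih =>
    by_cases h : s = []
    · subst h; simp [Multiset.filter_cons, totalTiles_cons, ih]
    · simp [Multiset.filter_cons, h, totalTiles_cons, ih, totalTiles_add]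

set_option linter.unusedSectionVars false

lemma head_cons_of_head? {s : List G} {g : G} (h : s.head? = some g) :
    ∃ t, s = g :: t := by
  cases s with
  | nil => simp at h
  | cons a t => simp at h; exact ⟨t, by rw [h]⟩

lemma tileCount_play_ne {s₁ s₂ : List G} {rest : Board G} {g q : G}
    (h1 : s₁.head? = some g) (h2 : s₂.head? = some g) (hq : q ≠ g) :
    tileCount (play s₁ s₂ rest) q = tileCount (s₁ ::ₘ s₂ ::ₘ rest) q := by
  obtain ⟨t₁, rfl⟩ := head_cons_of_head? h1
  obtain ⟨t₂, rfl⟩ := head_cons_of_head? h2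
  rw [play, tileCount_filter_ne_nil]
  simp [tileCount_cons, List.count_cons, hq.symm]

lemma tileCount_play_self {s₁ s₂ : List G} {rest : Board G} {g : G}
    (h1 : s₁.head? = some g) (h2 : s₂.head? = some g) :
    tileCount (play s₁ s₂ rest) g + 2 = tileCount (s₁ ::ₘ s₂ ::ₘ rest) g := by
  obtain ⟨t₁, rfl⟩ := head_cons_of_head? h1
  obtain ⟨t₂, rfl⟩ := head_cons_of_head? h2
  rw [play, tileCount_filter_ne_nil]
  simp [tileCount_cons, List.count_cons]
  ring

lemma totalTiles_play {s₁ s₂ : List G} {rest : Board G} {g : G}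
    (h1 : s₁.head? = some g) (h2 : s₂.head? = some g) :
    totalTiles (play s₁ s₂ rest) + 2 = totalTiles (s₁ ::ₘ s₂ ::ₘ rest) := by
  obtain ⟨t₁, rfl⟩ := head_cons_of_head? h1
  obtain ⟨t₂, rfl⟩ := head_cons_of_head? h2
  rw [play, totalTiles_filter_ne_nil]
  simp [totalTiles_cons]
  ring

lemma mem_play_of_mem_rest {s₁ s₂ u : List G} {rest : Board G}
    (hu : u ∈ rest) (hne : u ≠ []) : u ∈ play s₁ s₂ rest := by
  rw [play, Multiset.mem_filter]
  exact ⟨Multiset.mem_cons_of_mem (Multiset.mem_cons_of_mem hu), hne⟩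

lemma mem_rest_of_mem_play_len2 {B : Board G} {s₁ s₂ u : List G} {rest : Board G}
    (hH : HeightsOK B) (hB : B = s₁ ::ₘ s₂ ::ₘ rest)
    (hu : u ∈ play s₁ s₂ rest) (hlen : u.length = 2) : u ∈ rest := by
  have hs₁ : s₁ ∈ B := by rw [hB]; exact Multiset.mem_cons_self _ _
  have hs₂ : s₂ ∈ B := by rw [hB]; exact Multiset.mem_cons_of_mem (Multiset.mem_cons_self _ _)
  have l1 : s₁.tail.length ≤ 1 := by
    have := (hH s₁ hs₁).2
    cases s₁ <;> simp_all <;> omega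
  have l2 : s₂.tail.length ≤ 1 := by
    have := (hH s₂ hs₂).2
    cases s₂ <;> simp_all <;> omega
  rw [play, Multiset.mem_filter] at hu
  rcases Multiset.mem_cons.mp hu.1 with h | h
  · exfalso; rw [h] at hlen; omega
  rcases Multiset.mem_cons.mp h with h | h
  · exfalso; rw [h] at hlen; omega
  · exact h

lemma heightsOK_play {B : Board G} {s₁ s₂ : List G} {rest : Board G}
    (hH : HeightsOK B) (hB : B = s₁ ::ₘ s₂ ::ₘ rest) : HeightsOK (play s₁ s₂ rest) := by
  intro u hu
  rw [play, Multiset.mem_filter] at hu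
  refine ⟨hu.2, ?_⟩
  have hs₁ : s₁ ∈ B := by rw [hB]; exact Multiset.mem_cons_self _ _
  have hs₂ : s₂ ∈ B := by rw [hB]; exact Multiset.mem_cons_of_mem (Multiset.mem_cons_self _ _)
  rcases Multiset.mem_cons.mp hu.1 with h | h
  · have := (hH s₁ hs₁).2; subst h; cases s₁ <;> simp_all <;> omega
  rcases Multiset.mem_cons.mp h with h | h
  · have := (hH s₂ hs₂).2; subst h; cases s₂ <;> simp_all <;> omega
  · have hu' : u ∈ B := by rw [hB]; exact Multiset.mem_cons_of_mem (Multiset.mem_cons_of_mem h)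
    exact (hH u hu').2
lemma sum_map_le (M : Board G) (f h : List G → ℕ) (hfh : ∀ x ∈ M, f x ≤ h x) :
    (M.map f).sum ≤ (M.map h).sum := by
  induction M using Multiset.induction with
  | empty => simp
  | cons s M ih =>
    simp only [Multiset.map_cons, Multiset.sum_cons]
    exact Nat.add_le_add (hfh s (Multiset.mem_cons_self _ _))
      (ih (fun x hx => hfh x (Multiset.mem_cons_of_mem hx)))

lemma sum_ite_eq_card_filter (M : Board G) (p : List G → Prop) [DecidablePred p] :
    (M.map (fun x => if p x then 1 else 0)).sum = Multiset.card (M.filter p) := by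
  induction M using Multiset.induction with
  | empty => simp
  | cons s M ih =>
    by_cases h : p s <;> simp [Multiset.filter_cons, h, ih] <;> omega

lemma decomp_of_mem_mem {B : Board G} {u v : List G} (hu : u ∈ B) (hv : v ∈ B.erase u) :
    ∃ rest, B = u ::ₘ v ::ₘ rest ∧ rest = (B.erase u).erase v :=
  ⟨(B.erase u).erase v, by rw [Multiset.cons_erase hv, Multiset.cons_erase hu], rfl⟩

lemma cycle_of_sigma {B : Board G} (P : Finset G) (σ : G → G)
    (hσ : ∀ g ∈ P, σ g ∈ P ∧ [σ g, g] ∈ B)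
    (hc : ∀ g ∈ P, tileCount B g = 2) (g₀ : G) (hg₀ : g₀ ∈ P) : HasBlockedCycle B := by
  classical
  have hu : ∀ n : ℕ, σ^[n] g₀ ∈ P := by
    intro n
    induction n with
    | zero => exact hg₀
    | succ n ih => rw [Function.iterate_succ_apply']; exact (hσ _ ih).1
  have main : ∀ a b : ℕ, a < b → σ^[a] g₀ = σ^[b] g₀ → HasBlockedCycle B := by
    intro a b hab he
    have hxP : ∀ n : ℕ, σ^[n] (σ^[a] g₀) ∈ P := by
      intro n; rw [← Function.iterate_add_apply]; exact hu _
    have hper : σ^[b - a] (σ^[a] g₀) = σ^[a] g₀ := by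
      rw [← Function.iterate_add_apply, Nat.sub_add_cancel hab.le, ← he]
    have hQ : ∃ e, 0 < e ∧ σ^[e] (σ^[a] g₀) = σ^[a] g₀ := ⟨b - a, by omega, hper⟩
    obtain ⟨d, hdpos, hdx, hdmin⟩ :
        ∃ d, 0 < d ∧ σ^[d] (σ^[a] g₀) = σ^[a] g₀ ∧
          ∀ e < d, ¬(0 < e ∧ σ^[e] (σ^[a] g₀) = σ^[a] g₀) :=
      ⟨Nat.find hQ, (Nat.find_spec hQ).1, (Nat.find_spec hQ).2,
        fun e he => Nat.find_min hQ he⟩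
    obtain ⟨k, rfl⟩ : ∃ k, d = k + 1 := ⟨d - 1, by omega⟩
    set x := σ^[a] g₀ with hx
    refine ⟨k, fun i => σ^[i.val] x, ?_, ?_, ?_⟩
    · -- injective
      have key : ∀ c e : ℕ, c < e → e < k + 1 → σ^[c] x ≠ σ^[e] x := by
        intro c e hce hed hcontra
        have h1 : σ^[(k + 1 - e) + e] x = x := by
          rw [Nat.sub_add_cancel hed.le]; exact hdx
        rw [Function.iterate_add_apply] at h1
        rw [← hcontra, ← Function.iterate_add_apply] at h1
        exact hdmin (k + 1 - e + c) (by omega) ⟨by omega, h1⟩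
      intro i j hij
      rcases lt_trichotomy i.val j.val with h | h | h
      · exact absurd hij (key _ _ h j.isLt)
      · exact Fin.ext h
      · exact absurd hij.symm (key _ _ h i.isLt)
    · intro i; exact hc _ (hxP i.val)
    · intro i
      have hstep : ∀ y ∈ P, [σ y, y] ∈ B := fun y hy => (hσ y hy).2
      by_cases hl : i = Fin.last k
      · have h1 : (i + 1 : Fin (k + 1)) = 0 := by rw [hl]; exact Fin.last_add_one k
        have h2 : σ^[(0 : Fin (k + 1)).val] x = σ (σ^[i.val] x) := by
          rw [hl]
          show σ^[0] x = σ (σ^[k] x)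
          rw [← Function.iterate_succ_apply' σ k x, hdx]
          simp
        show [σ^[(i + 1 : Fin (k + 1)).val] x, σ^[i.val] x] ∈ B
        rw [h1, h2]
        exact hstep _ (hxP i.val)
      · have h1 : (i + 1 : Fin (k + 1)).val = i.val + 1 := by
          rw [Fin.val_add_one]; simp [hl]
        have h2 : σ^[(i + 1 : Fin (k + 1)).val] x = σ (σ^[i.val] x) := by
          rw [h1]; exact Function.iterate_succ_apply' σ i.val x
        show [σ^[(i + 1 : Fin (k + 1)).val] x, σ^[i.val] x] ∈ B
        rw [h2]
        exact hstep _ (hxP i.val)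
  obtain ⟨i, hi, j, hj, hij, he⟩ :=
    Finset.exists_ne_map_eq_of_card_lt_of_maps_to
      (s := Finset.range (P.card + 1)) (t := P) (by simp) (fun n _ => hu n)
  rcases lt_or_gt_of_ne hij with h | h
  · exact main i j h he
  · exact main j i h he.symm

lemma cycle_of_stuck (B : Board G) (hH : HeightsOK B)
    (hs : ∀ g, tileCount B g = 0 ∨ tileCount B g = 2 ∨ tileCount B g = 4)
    (hne : B ≠ 0)
    (hstuck : ∀ g : G, Multiset.card (B.filter (fun s => s.head? = some g)) ≤ 1) :
    HasBlockedCycle B := by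
  classical
  set tiles : Multiset G := B.bind (fun s => (s : Multiset G)) with htiles
  have hcount : ∀ g, tileCount B g = tiles.count g := by
    intro g; simp [tileCount, htiles, Multiset.count_bind]
  have hcard : totalTiles B = Multiset.card tiles := by
    simp [totalTiles, htiles, Multiset.card_bind, Function.comp_def]
  set P : Finset G := tiles.toFinset with hP
  have hmemP : ∀ g ∈ P, 2 ≤ tileCount B g := by
    intro g hg
    have h1 : 1 ≤ tiles.count g :=
      Multiset.one_le_count_iff_mem.mpr (Multiset.mem_toFinset.mp hg)
    have h2 := hcount g
    rcases hs g with h | h | h <;> omega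
  have hPsum : ∑ g ∈ P, tileCount B g = totalTiles B := by
    rw [hcard,
      show ∑ g ∈ P, tileCount B g = ∑ g ∈ P, tiles.count g from
        Finset.sum_congr rfl (fun g _ => hcount g)]
    exact Multiset.toFinset_sum_count_eq tiles
  have h2P : 2 * P.card ≤ totalTiles B := by
    rw [← hPsum]
    calc 2 * P.card = ∑ _g ∈ P, 2 := by rw [Finset.sum_const, smul_eq_mul, mul_comm]
      _ ≤ ∑ g ∈ P, tileCount B g := Finset.sum_le_sum hmemP
  have hT2 : totalTiles B ≤ 2 * Multiset.card B := by
    have h := sum_map_le B List.length (fun _ => 2) (fun s hs' => (hH s hs').2)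
    have h2 : ((B.map (fun _ => 2)).sum : ℕ) = 2 * Multiset.card B := by
      rw [Multiset.map_const', Multiset.sum_replicate, smul_eq_mul, mul_comm]
    rw [totalTiles]; omega
  have hHP : Multiset.card B ≤ P.card := by
    have hcardH : Multiset.card B =
        ∑ o ∈ (B.map (fun s => s.head?)).toFinset, (B.map (fun s => s.head?)).count o := by
      rw [Multiset.toFinset_sum_count_eq]; simp
    have hsub : (B.map (fun s => s.head?)).toFinset ⊆ P.image some := by
      intro o ho
      rw [Multiset.mem_toFinset, Multiset.mem_map] at ho
      obtain ⟨s, hsB, rfl⟩ := ho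
      obtain ⟨hne', _⟩ := hH s hsB
      obtain ⟨a, t, rfl⟩ : ∃ a t, s = a :: t := by
        cases s with
        | nil => exact absurd rfl hne'
        | cons a t => exact ⟨a, t, rfl⟩
      refine Finset.mem_image.mpr ⟨a, ?_, rfl⟩
      rw [hP, Multiset.mem_toFinset, htiles, Multiset.mem_bind]
      exact ⟨a :: t, hsB, by simp⟩
    have hcnt1 : ∀ o ∈ (B.map (fun s => s.head?)).toFinset,
        (B.map (fun s => s.head?)).count o ≤ 1 := by
      intro o ho
      obtain ⟨g, _, rfl⟩ := Finset.mem_image.mp (hsub ho)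
      rw [Multiset.count_map]
      have heq : B.filter (fun a => some g = a.head?) = B.filter (fun s => s.head? = some g) :=
        Multiset.filter_congr (fun x _ => by constructor <;> exact Eq.symm)
      rw [heq]
      exact hstuck g
    calc Multiset.card B
        = ∑ o ∈ (B.map (fun s => s.head?)).toFinset, (B.map (fun s => s.head?)).count o :=
          hcardH
      _ ≤ ∑ _o ∈ (B.map (fun s => s.head?)).toFinset, 1 := Finset.sum_le_sum hcnt1
      _ = (B.map (fun s => s.head?)).toFinset.card := by simp
      _ ≤ (P.image some).card := Finset.card_le_card hsub
      _ ≤ P.card := Finset.card_image_le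
  have hc2 : ∀ g ∈ P, tileCount B g = 2 := by
    by_contra hcc
    push_neg at hcc
    obtain ⟨g₀, hg₀, hne2⟩ := hcc
    have hlt : ∑ _g ∈ P, 2 < ∑ g ∈ P, tileCount B g :=
      Finset.sum_lt_sum hmemP ⟨g₀, hg₀, by have := hmemP g₀ hg₀; omega⟩
    rw [hPsum, Finset.sum_const, smul_eq_mul] at hlt
    omega
  have hbotex : ∀ g ∈ P, ∃ z, [z, g] ∈ B := by
    intro g hg
    by_contra hno
    push_neg at hno
    have hlen2 : ∀ s ∈ B, s.length = 2 := by
      by_contra hl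
      push_neg at hl
      obtain ⟨s, hsB, hne2⟩ := hl
      obtain ⟨rest, rfl⟩ := Multiset.exists_cons_of_mem hsB
      have hr : totalTiles rest ≤ 2 * Multiset.card rest := by
        have h := sum_map_le rest List.length (fun _ => 2)
          (fun x hx => (hH x (Multiset.mem_cons_of_mem hx)).2)
        have h2 : ((rest.map (fun _ => 2)).sum : ℕ) = 2 * Multiset.card rest := by
          rw [Multiset.map_const', Multiset.sum_replicate, smul_eq_mul, mul_comm]
        rw [totalTiles]; omega
      have hsl : s.length ≤ 2 := (hH s hsB).2
      have h3 := totalTiles_cons s rest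
      have h4 : Multiset.card (s ::ₘ rest) = Multiset.card rest + 1 := by
        rw [Multiset.card_cons]
      omega
    have hle : ∀ s ∈ B, List.count g s ≤ (if s.head? = some g then 1 else 0) := by
      intro s hsB
      have h2 := hlen2 s hsB
      obtain ⟨x, y, rfl⟩ : ∃ x y, s = [x, y] := by
        match s, h2 with
        | [x, y], _ => exact ⟨x, y, rfl⟩
      have hy : y ≠ g := fun h => hno x (h ▸ hsB)
      by_cases hx : x = g <;> simp [List.count_cons, hx, hy]
    have h1 : tileCount B g ≤ Multiset.card (B.filter (fun s => s.head? = some g)) := by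
      rw [tileCount, ← sum_ite_eq_card_filter]
      exact sum_map_le B _ _ hle
    have h2 := hstuck g
    have h3 := hmemP g hg
    omega
  have hσex : ∀ g : G, ∃ z, g ∈ P → [z, g] ∈ B := by
    intro g
    by_cases hg : g ∈ P
    · obtain ⟨z, hz⟩ := hbotex g hg
      exact ⟨z, fun _ => hz⟩
    · exact ⟨g, fun h => absurd h hg⟩
  choose σ hσ using hσex
  obtain ⟨s, hsB⟩ := Multiset.exists_mem_of_ne_zero hne
  obtain ⟨hne', _⟩ := hH s hsB
  obtain ⟨a, t, rfl⟩ : ∃ a t, s = a :: t := by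
    cases s with
    | nil => exact absurd rfl hne'
    | cons a t => exact ⟨a, t, rfl⟩
  have haP : a ∈ P := by
    rw [hP, Multiset.mem_toFinset, htiles, Multiset.mem_bind]
    exact ⟨a :: t, hsB, by simp⟩
  refine cycle_of_sigma P σ ?_ hc2 a haP
  intro g hg
  have hz := hσ g hg
  refine ⟨?_, hz⟩
  rw [hP, Multiset.mem_toFinset, htiles, Multiset.mem_bind]
  exact ⟨[σ g, g], hz, by simp⟩

open Fin.CommRing

lemma natCast_fin_add_one (k n : ℕ) :
    ((n + 1 : ℕ) : Fin (k + 1)) = (n : Fin (k + 1)) + 1 := by push_cast; ring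

lemma natCast_fin_val (k n : ℕ) (h : n ≤ k) : ((n : Fin (k + 1))).val = n := by
  rw [Fin.val_natCast]; exact Nat.mod_eq_of_lt (by omega)

lemma head?_pair (a b : G) : ([a, b] : List G).head? = some a := rfl

lemma cycle_play_elim {B : Board G} {s₁ s₂ : List G} {rest : Board G} {g : G}
    (hB : B = s₁ ::ₘ s₂ ::ₘ rest) (h1 : s₁.head? = some g) (h2 : s₂.head? = some g)
    (hH : HeightsOK B) (hNC : ¬ HasBlockedCycle B)
    (hC : HasBlockedCycle (play s₁ s₂ rest)) :
    ∃ (k : ℕ) (p : Fin (k + 1) → G), Function.Injective p ∧ p 0 = g ∧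
      (∀ i, i ≠ 0 → tileCount B (p i) = 2 ∧ p i ≠ g) ∧
      (∀ i, [p (i + 1), p i] ∈ rest) ∧ tileCount B g = 4 := by
  obtain ⟨k, q, hinj, hcnt, hstk⟩ := hC
  have hrest : ∀ i, [q (i + 1), q i] ∈ rest := fun i =>
    mem_rest_of_mem_play_len2 hH hB (hstk i) rfl
  have hrestB : ∀ i, [q (i + 1), q i] ∈ B := fun i => by
    rw [hB]; exact Multiset.mem_cons_of_mem (Multiset.mem_cons_of_mem (hrest i))
  have hcntB : ∀ i, q i ≠ g → tileCount B (q i) = 2 := by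
    intro i hi
    have h := tileCount_play_ne h1 h2 hi (rest := rest)
    rw [← hB] at h
    rw [← h]; exact hcnt i
  by_cases hg : ∃ j, q j = g
  · obtain ⟨j, hj⟩ := hg
    have h4 : tileCount B g = 4 := by
      have hp := tileCount_play_self h1 h2 (rest := rest)
      rw [← hB] at hp
      have hc := hcnt j; rw [hj] at hc; omega
    refine ⟨k, fun i => q (i + j), ?_, ?_, ?_, ?_, h4⟩
    · intro i i' h
      exact add_right_cancel (hinj h)
    · simpa using hj
    · intro i hi
      have hne : q (i + j) ≠ g := by
        intro h
        apply hi
        have h5 : i + j = j := hinj (h.trans hj.symm)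
        have : i + j = 0 + j := by rw [zero_add]; exact h5
        exact add_right_cancel this
      exact ⟨hcntB _ hne, hne⟩
    · intro i
      have h := hrest (i + j)
      have : i + j + 1 = i + 1 + j := by ring
      rwa [this] at h
  · push_neg at hg
    exact absurd ⟨k, q, hinj, fun i => hcntB i (hg i), hrestB⟩ hNC

def IsCycleFrom (B : Board G) (g : G) (k : ℕ) (p : ℕ → G) : Prop :=
  0 < k ∧ p 0 = g ∧
  (∀ n m, n ≤ k → m ≤ k → p n = p m → n = m) ∧
  (∀ n, 0 < n → n ≤ k → tileCount B (p n) = 2) ∧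
  (∀ n, n ≤ k → [p (n + 1), p n] ∈ B) ∧ p (k + 1) = g

def Dangerous (B : Board G) (g x : G) : Prop :=
  ∃ k p, IsCycleFrom B g k p ∧ p k = x

lemma dangerous_of_fin {B : Board G} {g : G} {k : ℕ} {p : Fin (k + 1) → G}
    (hk : 0 < k) (hinj : Function.Injective p) (hp0 : p 0 = g)
    (hcnt : ∀ i, i ≠ 0 → tileCount B (p i) = 2) (hstk : ∀ i, [p (i + 1), p i] ∈ B) :
    Dangerous B g (p (k : Fin (k + 1))) := by
  refine ⟨k, fun n => p (n : Fin (k + 1)), ⟨hk, ?_, ?_, ?_, ?_, ?_⟩, rfl⟩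
  · simpa using hp0
  · intro n m hn hm h
    have h2 := congrArg Fin.val (hinj h)
    rwa [natCast_fin_val k n hn, natCast_fin_val k m hm] at h2
  · intro n h0 hk'
    apply hcnt
    intro hc
    have := congrArg Fin.val hc
    rw [natCast_fin_val k n hk'] at this
    simp at this
    omega
  · intro n _
    have h := hstk (n : Fin (k + 1))
    show [p ((n + 1 : ℕ) : Fin (k + 1)), p (n : Fin (k + 1))] ∈ B
    rwa [natCast_fin_add_one]
  · show p ((k + 1 : ℕ) : Fin (k + 1)) = g
    have : ((k + 1 : ℕ) : Fin (k + 1)) = 0 := by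
      exact_mod_cast Fin.natCast_self (k + 1)
    rw [this, hp0]

lemma count_head_pos (r w : G) : 0 < List.count r [r, w] := by
  simp [List.count_cons]

lemma count_snd_pos (r w : G) : 0 < List.count r [w, r] := by
  simp [List.count_cons]

lemma cycle_key {B : Board G} {g : G} {k l : ℕ} {p q : ℕ → G}
    (hbot : ∀ z z', [z, g] ∈ B → [z', g] ∈ B → z = z')
    (hp : IsCycleFrom B g k p) (hq : IsCycleFrom B g l q) :
    ∀ i, 1 ≤ i → i ≤ k → i ≤ l → p i = q i := by
  obtain ⟨hk, hp0, hpinj, hpcnt, hpstk, hpk1⟩ := hp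
  obtain ⟨hl, hq0, hqinj, hqcnt, hqstk, hql1⟩ := hq
  intro i
  induction i using Nat.strong_induction_on with
  | _ i ih =>
    intro h1 hik hil
    rcases Nat.eq_or_lt_of_le h1 with h1e | h1lt
    · subst h1e
      have A1 : [p 1, g] ∈ B := by have h := hpstk 0 (by omega); rwa [hp0] at h
      have A2 : [q 1, g] ∈ B := by have h := hqstk 0 (by omega); rwa [hq0] at h
      exact hbot _ _ A1 A2
    · obtain ⟨j, rfl⟩ : ∃ j, i = j + 1 := ⟨i - 1, by omega⟩
      have hj1 : 1 ≤ j := by omega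
      have hr : p j = q j := ih j (by omega) hj1 (by omega) (by omega)
      have hprev : p (j - 1) = q (j - 1) := by
        rcases Nat.eq_or_lt_of_le hj1 with hj | hj
        · rw [← hj]; simp [hp0, hq0]
        · exact ih (j - 1) (by omega) (by omega) (by omega) (by omega)
      by_contra hne'
      have A1 : [p j, p (j - 1)] ∈ B := by
        have h := hpstk (j - 1) (by omega)
        rwa [show j - 1 + 1 = j by omega] at h
      have A2 : [p (j + 1), p j] ∈ B := hpstk j (by omega)
      have A3 : [q (j + 1), p j] ∈ B := by
        have h := hqstk j (by omega); rwa [← hr] at h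
      have d1 : p (j + 1) ≠ p j := fun h => by
        have := hpinj _ _ (by omega) (by omega) h; omega
      have d2 : q (j + 1) ≠ p j := fun h => by
        rw [hr] at h
        have := hqinj _ _ (by omega) (by omega) h; omega
      have d3 : p (j - 1) ≠ p j := fun h => by
        have := hpinj _ _ (by omega) (by omega) h; omega
      have hD1 : ([p j, p (j - 1)] : List G) ≠ [p (j + 1), p j] := by
        intro h; injection h with ha hb; exact d1 ha.symm
      have hD2 : ([p j, p (j - 1)] : List G) ≠ [q (j + 1), p j] := by
        intro h; injection h with ha hb; exact d2 ha.symm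
      have hD3 : ([p (j + 1), p j] : List G) ≠ [q (j + 1), p j] := by
        intro h; injection h with ha hb; exact hne' ha
      have htr := tileCount_triple A1 A2 A3 hD1 hD2 hD3 (p j)
      have hc1 := count_head_pos (p j) (p (j - 1))
      have hc2 := count_snd_pos (p j) (p (j + 1))
      have hc3 := count_snd_pos (p j) (q (j + 1))
      have hcv := hpcnt j (by omega) (by omega)
      omega

lemma cycle_not_lt {B : Board G} {g : G} {k l : ℕ} {p q : ℕ → G}
    (hbot : ∀ z z', [z, g] ∈ B → [z', g] ∈ B → z = z')
    (hp : IsCycleFrom B g k p) (hq : IsCycleFrom B g l q) (hkl : k < l) : False := by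
  have key := cycle_key hbot hp hq
  obtain ⟨hk, hp0, hpinj, hpcnt, hpstk, hpk1⟩ := hp
  obtain ⟨hl, hq0, hqinj, hqcnt, hqstk, hql1⟩ := hq
  have hr : p k = q k := key k (by omega) le_rfl (by omega)
  have hprev : p (k - 1) = q (k - 1) := by
    rcases Nat.eq_or_lt_of_le hk with hk' | hk'
    · rw [← hk']; simp [hp0, hq0]
    · exact key (k - 1) (by omega) (by omega) (by omega)
  have A1 : [p k, p (k - 1)] ∈ B := by
    have h := hpstk (k - 1) (by omega)
    rwa [show k - 1 + 1 = k by omega] at h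
  have A2 : [g, p k] ∈ B := by
    have h := hpstk k le_rfl
    rwa [hpk1] at h
  have A3 : [q (k + 1), p k] ∈ B := by
    have h := hqstk k (by omega); rwa [← hr] at h
  have hpkg : p k ≠ g := fun h => by
    have := hpinj k 0 le_rfl (by omega) (h.trans hp0.symm); omega
  have d2 : q (k + 1) ≠ p k := fun h => by
    rw [hr] at h
    have := hqinj _ _ (by omega) (by omega) h; omega
  have d3 : q (k + 1) ≠ g := fun h => by
    have := hqinj (k + 1) 0 (by omega) (by omega) (h.trans hq0.symm); omega
  have d4 : p (k - 1) ≠ p k := fun h => by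
    have := hpinj _ _ (by omega) (by omega) h; omega
  have hD1 : ([p k, p (k - 1)] : List G) ≠ [g, p k] := by
    intro h; injection h with ha hb; exact hpkg ha
  have hD2 : ([p k, p (k - 1)] : List G) ≠ [q (k + 1), p k] := by
    intro h; injection h with ha hb; exact d2 ha.symm
  have hD3 : ([g, p k] : List G) ≠ [q (k + 1), p k] := by
    intro h; injection h with ha hb; exact d3 ha.symm
  have htr := tileCount_triple A1 A2 A3 hD1 hD2 hD3 (p k)
  have hc1 := count_head_pos (p k) (p (k - 1))
  have hc2 := count_snd_pos (p k) g
  have hc3 := count_snd_pos (p k) (q (k + 1))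
  have hcv := hpcnt k (by omega) le_rfl
  omega

lemma dangerous_unique {B : Board G} {g x y : G}
    (hbot : ∀ z z', [z, g] ∈ B → [z', g] ∈ B → z = z')
    (hx : Dangerous B g x) (hy : Dangerous B g y) : x = y := by
  obtain ⟨k, p, hp, hpk⟩ := hx
  obtain ⟨l, q, hq, hql⟩ := hy
  have hkl : k = l := by
    rcases lt_trichotomy k l with h | h | h
    · exact (cycle_not_lt hbot hp hq h).elim
    · exact h
    · exact (cycle_not_lt hbot hq hp h).elim
  subst hkl
  have := cycle_key hbot hp hq k (hp.1) le_rfl le_rfl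
  rw [hpk, hql] at this
  exact this

lemma cycle_move {B B' : Board G} (hm : Move B B') (hc : HasBlockedCycle B) :
    HasBlockedCycle B' := by
  obtain ⟨g, s₁, s₂, rest, hB, h1, h2, hB'⟩ := hm
  obtain ⟨k, p, hinj, hcnt, hstk⟩ := hc
  have hsplit : ∀ q : G, tileCount B q = s₁.count q + s₂.count q + tileCount rest q := by
    intro q; rw [hB, tileCount_cons, tileCount_cons]; ring
  have hg : ∀ i, p i ≠ g := by
    intro i hig
    have hC := hstk i
    rw [hB] at hC
    have hc1 : 1 ≤ s₁.count g := by
      obtain ⟨t, rfl⟩ := head_cons_of_head? h1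
      simp [List.count_cons]
    have hc2 : 1 ≤ s₂.count g := by
      obtain ⟨t, rfl⟩ := head_cons_of_head? h2
      simp [List.count_cons]
    have hcv := hcnt i
    rw [hig] at hcv
    rcases Multiset.mem_cons.mp hC with hCe | hC2
    · -- C = s₁ : head of C is p (i+1) = g = p i ⇒ i + 1 = i
      have hhd : p (i + 1) = g := by
        have := congrArg List.head? hCe
        rw [head?_pair, h1] at this
        exact Option.some_injective _ this
      have hii : i + 1 = i := hinj (by rw [hhd, hig])
      -- then p i appears twice in s₁
      have : s₁.count g = 2 := by
        rw [← hCe, hii, hig]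
        simp [List.count_cons]
      have := hsplit g
      omega
    rcases Multiset.mem_cons.mp hC2 with hCe | hC3
    · have hhd : p (i + 1) = g := by
        have := congrArg List.head? hCe
        rw [head?_pair, h2] at this
        exact Option.some_injective _ this
      have hii : i + 1 = i := hinj (by rw [hhd, hig])
      have : s₂.count g = 2 := by
        rw [← hCe, hii, hig]
        simp [List.count_cons]
      have := hsplit g
      omega
    · have : 1 ≤ tileCount rest g := by
        have h := count_le_tileCount hC3 g
        have : 0 < List.count g [p (i + 1), g] := count_snd_pos g (p (i + 1))
        rw [hig] at h
        omega
      have := hsplit g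
      omega
  refine ⟨k, p, hinj, ?_, ?_⟩
  · intro i
    rw [hB']
    have h := tileCount_play_ne h1 h2 (hg i) (rest := rest)
    rw [← hB] at h
    rw [h]; exact hcnt i
  · intro i
    have hC := hstk i
    rw [hB] at hC
    have hCne1 : [p (i + 1), p i] ≠ s₁ := by
      intro h
      apply hg (i + 1)
      have := congrArg List.head? h
      rw [head?_pair, h1] at this
      exact Option.some_injective _ this
    have hCne2 : [p (i + 1), p i] ≠ s₂ := by
      intro h
      apply hg (i + 1)
      have := congrArg List.head? h
      rw [head?_pair, h2] at this
      exact Option.some_injective _ this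
    rcases Multiset.mem_cons.mp hC with h | h
    · exact absurd h hCne1
    rcases Multiset.mem_cons.mp h with h | h
    · exact absurd h hCne2
    · rw [hB']
      exact mem_play_of_mem_rest h (by simp)

lemma no_cycle_of_solvable {B : Board G} (hs : Solvable B) : ¬ HasBlockedCycle B := by
  intro hc
  have hz : HasBlockedCycle (0 : Board G) := by
    have main : ∀ C : Board G, Relation.ReflTransGen Move B C → HasBlockedCycle C := by
      intro C h
      induction h with
      | refl => exact hc
      | tail _ h2 ih => exact cycle_move h2 ih
    exact main 0 hs
  obtain ⟨k, p, _, _, hstk⟩ := hz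
  exact absurd (hstk 0) (Multiset.notMem_zero _)

lemma filter_erase' (pr : List G → Prop) [DecidablePred pr] (B : Board G) {a : List G}
    (ha : pr a) : (B.erase a).filter pr = (B.filter pr).erase a := by
  ext b
  by_cases hba : b = a
  · subst hba
    rw [Multiset.count_erase_self, Multiset.count_filter, Multiset.count_filter,
      if_pos ha, if_pos ha, Multiset.count_erase_self]
  · rw [Multiset.count_erase_of_ne hba, Multiset.count_filter, Multiset.count_filter,
      Multiset.count_erase_of_ne hba]

lemma keep_one (pr : List G → Prop) [DecidablePred pr] {B : Board G} {u v w : List G}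
    (hT : B.filter pr = u ::ₘ v ::ₘ {w}) :
    ∃ rest', B = u ::ₘ v ::ₘ rest' ∧ rest'.filter pr = {w} := by
  have hu : u ∈ B.filter pr := by rw [hT]; exact Multiset.mem_cons_self _ _
  obtain ⟨huB, hupr⟩ := Multiset.mem_filter.mp hu
  have hv : v ∈ (B.erase u).filter pr := by
    rw [filter_erase' pr B hupr, hT, Multiset.erase_cons_head]
    exact Multiset.mem_cons_self _ _
  obtain ⟨hvB, hvpr⟩ := Multiset.mem_filter.mp hv
  refine ⟨(B.erase u).erase v, ?_, ?_⟩
  · rw [Multiset.cons_erase hvB, Multiset.cons_erase huB]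
  · rw [filter_erase' pr _ hvpr, filter_erase' pr B hupr, hT,
      Multiset.erase_cons_head, Multiset.erase_cons_head]

lemma keep_zero (pr : List G → Prop) [DecidablePred pr] {B : Board G} {u v : List G}
    (hT : B.filter pr = u ::ₘ {v}) :
    ∃ rest', B = u ::ₘ v ::ₘ rest' ∧ rest'.filter pr = 0 := by
  have hu : u ∈ B.filter pr := by rw [hT]; exact Multiset.mem_cons_self _ _
  obtain ⟨huB, hupr⟩ := Multiset.mem_filter.mp hu
  have hv : v ∈ (B.erase u).filter pr := by
    rw [filter_erase' pr B hupr, hT, Multiset.erase_cons_head]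
    exact Multiset.mem_singleton_self _
  obtain ⟨hvB, hvpr⟩ := Multiset.mem_filter.mp hv
  refine ⟨(B.erase u).erase v, ?_, ?_⟩
  · rw [Multiset.cons_erase hvB, Multiset.cons_erase huB]
  · rw [filter_erase' pr _ hvpr, filter_erase' pr B hupr, hT,
      Multiset.erase_cons_head, Multiset.erase_singleton]

lemma triple_le' {B : Board G} {s v : List G} (h2 : 2 ≤ B.count s) (hv : v ∈ B)
    (hne : s ≠ v) : ({s, s, v} : Board G) ≤ B := by
  rw [Multiset.le_iff_count]
  intro a
  rcases eq_or_ne a s with rfl | has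
  · simpa [Multiset.count_cons, Multiset.count_singleton, hne] using h2
  · rcases eq_or_ne a v with rfl | hav
    · simpa [Multiset.count_cons, Multiset.count_singleton, has] using
        Multiset.one_le_count_iff_mem.mpr hv
    · simp [Multiset.count_cons, Multiset.count_singleton, has, hav]

lemma tileCount_eq_card {M : Board G} {g : G} (h : ∀ w ∈ M, w.count g = 1) :
    tileCount M g = Multiset.card M := by
  induction M using Multiset.induction with
  | empty => simp [tileCount]
  | cons s M ih =>
    rw [tileCount_cons, h s (Multiset.mem_cons_self _ _),
      ih (fun w hw => h w (Multiset.mem_cons_of_mem hw)), Multiset.card_cons]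
    ring

lemma dangerous_count {B : Board G} {g x : G} (h : Dangerous B g x) : tileCount B x = 2 := by
  obtain ⟨k, p, ⟨hk, _, _, hcnt, _, _⟩, hpk⟩ := h
  rw [← hpk]
  exact hcnt k hk le_rfl

lemma rot3 (a b c : List G) : (a ::ₘ b ::ₘ {c} : Board G) = b ::ₘ c ::ₘ {a} := by
  rw [Multiset.cons_swap]
  congr 1
  exact Multiset.pair_comm a c

lemma swap23 (a b c : List G) : (a ::ₘ b ::ₘ {c} : Board G) = a ::ₘ c ::ₘ {b} := by
  congr 1
  exact Multiset.pair_comm b c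

lemma exists_safe_move (B : Board G) (hH : HeightsOK B)
    (hs : ∀ g : G, tileCount B g = 0 ∨ tileCount B g = 2 ∨ tileCount B g = 4)
    (hne : B ≠ 0) (hNC : ¬ HasBlockedCycle B) :
    ∃ (g : G) (s₁ s₂ : List G) (rest : Board G),
      B = s₁ ::ₘ s₂ ::ₘ rest ∧ s₁.head? = some g ∧ s₂.head? = some g ∧
      ¬ HasBlockedCycle (play s₁ s₂ rest) := by
  classical
  by_cases hstuck : ∀ g : G, Multiset.card (B.filter (fun s => s.head? = some g)) ≤ 1
  · exact absurd (cycle_of_stuck B hH hs hne hstuck) hNC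
  push_neg at hstuck
  obtain ⟨g, hg2⟩ := hstuck
  set T := B.filter (fun s : List G => s.head? = some g) with hTdef
  have hg2' : 2 ≤ Multiset.card T := hg2
  have hhead : ∀ w ∈ T, w.head? = some g := fun w hw => (Multiset.mem_filter.mp hw).2
  have hTB : ∀ w ∈ T, w ∈ B := fun w hw => (Multiset.mem_filter.mp hw).1
  have hmem1 : ∀ w ∈ T, 1 ≤ w.count g := by
    intro w hw
    obtain ⟨t, rfl⟩ := head_cons_of_head? (hhead w hw)
    simp [List.count_cons]
  have hTle : tileCount T g ≤ tileCount B g :=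
    tileCount_le_of_le (Multiset.filter_le _ _) g
  have hT'eq : tileCount T g +
      tileCount (B.filter (fun s => ¬ s.head? = some g)) g = tileCount B g := by
    rw [hTdef, ← tileCount_add, Multiset.filter_add_not]
  have pick : ∀ u v, u ∈ T → v ∈ T.erase u →
      ∃ rest', B = u ::ₘ v ::ₘ rest' ∧ rest' = (B.erase u).erase v := by
    intro u v hu hv
    have huB := hTB u hu
    have hvBe : v ∈ B.erase u := by
      have h : v ∈ (B.erase u).filter (fun s : List G => s.head? = some g) := by
        rw [filter_erase' _ B (hhead u hu), ← hTdef]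
        exact hv
      exact (Multiset.mem_filter.mp h).1
    exact decomp_of_mem_mem huB hvBe
  have pick2 : ∃ u v, u ∈ T ∧ v ∈ T.erase u := by
    have h0 : T ≠ 0 := by
      intro h
      rw [h] at hg2'
      simp at hg2'
    obtain ⟨u, hu⟩ := Multiset.exists_mem_of_ne_zero h0
    have h1 := Multiset.card_erase_of_mem hu
    have h2 : T.erase u ≠ 0 := by
      intro h
      rw [h] at h1
      simp at h1
      omega
    obtain ⟨v, hv⟩ := Multiset.exists_mem_of_ne_zero h2
    exact ⟨u, v, hu, hv⟩
  rcases hs g with h0 | h2c | h4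
  · -- count 0 : impossible
    exfalso
    obtain ⟨u, v, hu, _⟩ := pick2
    have := count_le_tileCount (hTB u hu) g
    have := hmem1 u hu
    omega
  · -- count 2 : any move works
    obtain ⟨u, v, hu, hv⟩ := pick2
    obtain ⟨rest', hB', _⟩ := pick u v hu hv
    refine ⟨g, u, v, rest', hB', hhead u hu, hhead v (Multiset.mem_of_mem_erase hv), ?_⟩
    intro hC
    obtain ⟨k, p, _, _, _, _, h4⟩ :=
      cycle_play_elim hB' (hhead u hu) (hhead v (Multiset.mem_of_mem_erase hv)) hH hNC hC
    omega
  -- count 4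
  rcases Nat.lt_or_ge (Multiset.card T) 3 with hc2 | hc3
  · -- card T = 2
    have hcT : Multiset.card T = 2 := by omega
    obtain ⟨x, y, hTxy⟩ := Multiset.card_eq_two.mp hcT
    have hfil0 : B.filter (fun s : List G => s.head? = some g) = x ::ₘ {y} := by
      rw [← hTdef, hTxy]; rfl
    obtain ⟨rest', hB', hfil⟩ := keep_zero _ hfil0
    have hxT : x ∈ T := by rw [hTxy]; exact Multiset.mem_cons_self _ _
    have hyT : y ∈ T := by rw [hTxy]; exact Multiset.mem_cons_of_mem (Multiset.mem_singleton_self _)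
    refine ⟨g, x, y, rest', hB', hhead x hxT, hhead y hyT, ?_⟩
    intro hC
    obtain ⟨k, p, hinj, hp0, hcnt, hstk, _⟩ :=
      cycle_play_elim hB' (hhead x hxT) (hhead y hyT) hH hNC hC
    have hSlast : [g, p (Fin.last k)] ∈ rest' := by
      have h := hstk (Fin.last k)
      rwa [Fin.last_add_one, hp0] at h
    have hmemf : [g, p (Fin.last k)] ∈
        rest'.filter (fun s : List G => s.head? = some g) :=
      Multiset.mem_filter.mpr ⟨hSlast, rfl⟩
    rw [hfil] at hmemf
    exact Multiset.notMem_zero _ hmemf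
  -- card T ≥ 3
  by_cases hgg2 : ∃ w ∈ T, 2 ≤ w.count g
  · -- some [g, g] on top
    obtain ⟨w, hwT, hw2⟩ := hgg2
    have hwB := hTB w hwT
    have hwgg : w = [g, g] := by
      obtain ⟨t, rfl⟩ := head_cons_of_head? (hhead w hwT)
      have hlen := (hH _ hwB).2
      match t, hw2, hlen with
      | [], hw2, _ => simp [List.count_cons] at hw2
      | [x], hw2, _ =>
        have : x = g := by
          by_contra hxg
          simp [List.count_cons, hxg] at hw2
        rw [this]
      | x :: y :: t', _, hlen => simp at hlen
    subst hwgg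
    -- counting : card T = 3, tileCount T g = 4
    have hTsplit : T = [g, g] ::ₘ T.erase [g, g] := (Multiset.cons_erase hwT).symm
    have hTcount : tileCount T g = 2 + tileCount (T.erase [g, g]) g := by
      rw [hTsplit, tileCount_cons]
      simp [List.count_cons]
    have hcerase := Multiset.card_erase_of_mem hwT
    rw [Nat.pred_eq_sub_one] at hcerase
    have hgg2c : List.count g [g, g] = 2 := by simp [List.count_cons]
    have hele : Multiset.card (T.erase [g, g]) ≤ tileCount (T.erase [g, g]) g := by
      have h := sum_map_le (T.erase [g, g]) (fun _ => 1) (fun w => w.count g)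
        (fun w hw => hmem1 w (Multiset.mem_of_mem_erase hw))
      rwa [Multiset.map_const', Multiset.sum_replicate, smul_eq_mul, mul_one] at h
    have hcT3 : Multiset.card T = 3 ∧ tileCount (T.erase [g, g]) g = 2 := by
      constructor <;> omega
    have herne : T.erase [g, g] ≠ 0 := by
      intro h
      rw [h] at hcerase
      simp at hcerase
      omega
    obtain ⟨v, hv⟩ := Multiset.exists_mem_of_ne_zero herne
    have hv1 : v.count g = 1 := by
      obtain ⟨M, hM⟩ := Multiset.exists_cons_of_mem hv
      have hMc : Multiset.card M = 1 := by
        have := congrArg Multiset.card hM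
        simp at this
        omega
      obtain ⟨m, rfl⟩ := Multiset.card_eq_one.mp hMc
      have hmT : m ∈ T := by
        have hme : m ∈ T.erase [g, g] := by
          rw [hM]
          exact Multiset.mem_cons_of_mem (Multiset.mem_singleton_self _)
        exact Multiset.mem_of_mem_erase hme
      have h1 := hmem1 m hmT
      have h2 := hmem1 v (Multiset.mem_of_mem_erase hv)
      have h3 : tileCount (T.erase [g, g]) g = v.count g + m.count g := by
        rw [hM, tileCount_cons]
        simp [tileCount]
      omega
    obtain ⟨rest', hB', hrd⟩ := pick [g, g] v hwT hv
    have hvhead := hhead v (Multiset.mem_of_mem_erase hv)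
    refine ⟨g, [g, g], v, rest', hB', rfl, hvhead, ?_⟩
    intro hC
    obtain ⟨k, p, hinj, hp0, hcnt, hstk, _⟩ :=
      cycle_play_elim hB' rfl hvhead hH hNC hC
    have hS0 : [p (0 + 1), g] ∈ rest' := by
      have h := hstk 0
      rwa [hp0] at h
    by_cases hz : p (0 + 1) = g
    · rw [hz] at hS0
      have h1 : 1 ≤ rest'.count [g, g] := Multiset.one_le_count_iff_mem.mpr hS0
      have h2 : rest'.count [g, g] ≤ (B.erase [g, g]).count [g, g] := by
        rw [hrd]
        exact Multiset.count_le_of_le _ (Multiset.erase_le _ _)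
      have h3 := Multiset.count_erase_self ([g, g]) B
      have hvne : ([g, g] : List G) ≠ v := by
        intro h
        rw [← h] at hv1
        simp [List.count_cons] at hv1
      have h4' : 2 ≤ B.count [g, g] := by omega
      have htr := tileCount_le_of_le (triple_le' h4' (hTB v (Multiset.mem_of_mem_erase hv)) hvne) g
      have htc : tileCount ({[g, g], [g, g], v} : Board G) g = 4 + v.count g := by
        simp [tileCount, List.count_cons]
        ring
      omega
    · have hS0B : [p (0 + 1), g] ∈ B := by
        rw [hB']
        exact Multiset.mem_cons_of_mem (Multiset.mem_cons_of_mem hS0)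
      have hmt' : [p (0 + 1), g] ∈ B.filter (fun s => ¬ s.head? = some g) :=
        Multiset.mem_filter.mpr ⟨hS0B, by simpa using hz⟩
      have hle := count_le_tileCount hmt' g
      have hcg : 1 ≤ List.count g [p (0 + 1), g] := count_snd_pos g _
      omega
  · -- every top stack has exactly one g
    push_neg at hgg2
    have hall1 : ∀ w ∈ T, w.count g = 1 := fun w hw =>
      le_antisymm (by have := hgg2 w hw; omega) (hmem1 w hw)
    have hTcard : tileCount T g = Multiset.card T := tileCount_eq_card hall1
    have hc34 : Multiset.card T = 3 ∨ Multiset.card T = 4 := by omega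
    rcases hc34 with hc3' | hc4'
    · -- card T = 3
      have hT'1 : tileCount (B.filter (fun s => ¬ s.head? = some g)) g = 1 := by omega
      have hggB : [g, g] ∉ B := by
        intro h
        have hT : [g, g] ∈ T := Multiset.mem_filter.mpr ⟨h, rfl⟩
        have := hall1 _ hT
        simp [List.count_cons] at this
      have hbot : ∀ z z', [z, g] ∈ B → [z', g] ∈ B → z = z' := by
        intro z z' hz hz'
        have hzg : z ≠ g := fun h => hggB (h ▸ hz)
        have hz'g : z' ≠ g := fun h => hggB (h ▸ hz')
        by_contra hzz
        have m1 : [z, g] ∈ B.filter (fun s => ¬ s.head? = some g) :=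
          Multiset.mem_filter.mpr ⟨hz, by simp [hzg]⟩
        have m2 : [z', g] ∈ B.filter (fun s => ¬ s.head? = some g) :=
          Multiset.mem_filter.mpr ⟨hz', by simp [hz'g]⟩
        have hd : ([z, g] : List G) ≠ [z', g] := by
          intro h
          injection h with ha _
          exact hzz ha
        have := tileCount_le_of_le (pair_le m1 m2 hd) g
        have e1 : tileCount ({[z, g], [z', g]} : Board G) g = 2 := by
          simp [tileCount, List.count_cons, hzg, hz'g]
        omega
      obtain ⟨w1, w2, w3, hT3⟩ := Multiset.card_eq_three.mp hc3'
      have hTexp : T = w1 ::ₘ w2 ::ₘ {w3} := hT3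
      have hw1T : w1 ∈ T := by rw [hTexp]; exact Multiset.mem_cons_self _ _
      have hw2T : w2 ∈ T := by
        rw [hTexp]; exact Multiset.mem_cons_of_mem (Multiset.mem_cons_self _ _)
      have hw3T : w3 ∈ T := by
        rw [hTexp]
        exact Multiset.mem_cons_of_mem (Multiset.mem_cons_of_mem (Multiset.mem_singleton_self _))
      have hshape : ∀ w ∈ T, w = [g] ∨ ∃ x, x ≠ g ∧ w = [g, x] := by
        intro w hw
        obtain ⟨t, rfl⟩ := head_cons_of_head? (hhead w hw)
        have hlen := (hH _ (hTB _ hw)).2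
        have hcnt1 := hall1 _ hw
        match t, hlen, hcnt1 with
        | [], _, _ => exact Or.inl rfl
        | [x], _, hcnt1 =>
          refine Or.inr ⟨x, ?_, rfl⟩
          intro hxg
          subst hxg
          simp [List.count_cons] at hcnt1
        | x :: y :: t', hlen, _ => simp at hlen
      by_cases h1len : ∃ w ∈ T, w = [g]
      · -- keep the height-one stack
        obtain ⟨w, hwT, rfl⟩ := h1len
        have hmem3 : w1 = [g] ∨ w2 = [g] ∨ w3 = [g] := by
          rw [hTexp] at hwT
          rcases Multiset.mem_cons.mp hwT with h | h
          · exact Or.inl h.symm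
          rcases Multiset.mem_cons.mp h with h | h
          · exact Or.inr (Or.inl h.symm)
          · exact Or.inr (Or.inr (Multiset.mem_singleton.mp h).symm)
        have hrot : ∃ a b, a ∈ T ∧ b ∈ T ∧
            B.filter (fun s : List G => s.head? = some g) = a ::ₘ b ::ₘ {[g]} := by
          rcases hmem3 with h | h | h
          · exact ⟨w2, w3, hw2T, hw3T, by rw [← hTdef, hTexp, h, rot3]⟩
          · exact ⟨w1, w3, hw1T, hw3T, by rw [← hTdef, hTexp, h, swap23, rot3, swap23]⟩
          · exact ⟨w1, w2, hw1T, hw2T, by rw [← hTdef, hTexp, h]⟩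
        obtain ⟨a, b, haT, hbT, hab⟩ := hrot
        obtain ⟨rest', hB', hfil⟩ := keep_one _ hab
        refine ⟨g, a, b, rest', hB', hhead a haT, hhead b hbT, ?_⟩
        intro hC
        obtain ⟨k, p, hinj, hp0, hcnt, hstk, _⟩ :=
          cycle_play_elim hB' (hhead a haT) (hhead b hbT) hH hNC hC
        have hSlast : [g, p (Fin.last k)] ∈ rest' := by
          have h := hstk (Fin.last k)
          rwa [Fin.last_add_one, hp0] at h
        have hmemf : [g, p (Fin.last k)] ∈
            rest'.filter (fun s : List G => s.head? = some g) :=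
          Multiset.mem_filter.mpr ⟨hSlast, rfl⟩
        rw [hfil] at hmemf
        have := Multiset.mem_singleton.mp hmemf
        simp at this
      · -- all three stacks have height two
        push_neg at h1len
        have hx : ∀ w ∈ T, ∃ x, x ≠ g ∧ w = [g, x] := by
          intro w hw
          rcases hshape w hw with h | h
          · exact absurd h (h1len w hw)
          · exact h
        obtain ⟨x1, hx1g, hw1⟩ := hx w1 hw1T
        obtain ⟨x2, hx2g, hw2⟩ := hx w2 hw2T
        obtain ⟨x3, hx3g, hw3⟩ := hx w3 hw3T
        have hpickd : ∃ a b x, x ≠ g ∧ ¬ Dangerous B g x ∧ a ∈ T ∧ b ∈ T ∧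
            B.filter (fun s : List G => s.head? = some g) = a ::ₘ b ::ₘ {[g, x]} := by
          by_cases hd1 : Dangerous B g x1
          · by_cases hd2 : Dangerous B g x2
            · by_cases hd3 : Dangerous B g x3
              · exfalso
                have e12 : x1 = x2 := dangerous_unique hbot hd1 hd2
                have e13 : x1 = x3 := dangerous_unique hbot hd1 hd3
                have hcnt2 : tileCount B x1 = 2 := dangerous_count hd1
                have h3 : tileCount T x1 = 3 := by
                  rw [hTexp, hw1, hw2, ← e12, hw3, ← e13]
                  simp [tileCount, List.count_cons, hx1g, hx1g.symm]
                have := tileCount_le_of_le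
                  (Multiset.filter_le (fun s : List G => s.head? = some g) B) x1
                rw [← hTdef] at this
                omega
              · exact ⟨w1, w2, x3, hx3g, hd3, hw1T, hw2T,
                  by rw [← hTdef, hTexp, hw3]⟩
            · exact ⟨w1, w3, x2, hx2g, hd2, hw1T, hw3T,
                by rw [← hTdef, hTexp, hw2, swap23]⟩
          · exact ⟨w2, w3, x1, hx1g, hd1, hw2T, hw3T,
              by rw [← hTdef, hTexp, hw1, rot3]⟩
        obtain ⟨a, b, x, hxg, hxnd, haT, hbT, hab⟩ := hpickd
        obtain ⟨rest', hB', hfil⟩ := keep_one _ hab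
        refine ⟨g, a, b, rest', hB', hhead a haT, hhead b hbT, ?_⟩
        intro hC
        obtain ⟨k, p, hinj, hp0, hcnt, hstk, _⟩ :=
          cycle_play_elim hB' (hhead a haT) (hhead b hbT) hH hNC hC
        have hSlast : [g, p (Fin.last k)] ∈ rest' := by
          have h := hstk (Fin.last k)
          rwa [Fin.last_add_one, hp0] at h
        have hmemf : [g, p (Fin.last k)] ∈
            rest'.filter (fun s : List G => s.head? = some g) :=
          Multiset.mem_filter.mpr ⟨hSlast, rfl⟩
        rw [hfil] at hmemf
        have heq := Multiset.mem_singleton.mp hmemf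
        have hpl : p (Fin.last k) = x := by
          simpa using heq
        rcases Nat.eq_zero_or_pos k with hk0 | hkpos
        · subst hk0
          have hlast0 : (Fin.last 0) = (0 : Fin 1) := rfl
          rw [hlast0, hp0] at hpl
          exact hxg hpl.symm
        · apply hxnd
          have hD := dangerous_of_fin hkpos hinj hp0 (fun i hi => (hcnt i hi).1)
            (fun i => by
              rw [hB']
              exact Multiset.mem_cons_of_mem (Multiset.mem_cons_of_mem (hstk i)))
          rw [Fin.natCast_eq_last, hpl] at hD
          exact hD
    · -- card T = 4 : no bottom g at all
      have hT'0 : tileCount (B.filter (fun s => ¬ s.head? = some g)) g = 0 := by omega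
      obtain ⟨u, v, hu, hv⟩ := pick2
      obtain ⟨rest', hB', hrd⟩ := pick u v hu hv
      have hvT := Multiset.mem_of_mem_erase hv
      refine ⟨g, u, v, rest', hB', hhead u hu, hhead v hvT, ?_⟩
      intro hC
      obtain ⟨k, p, hinj, hp0, hcnt, hstk, _⟩ :=
        cycle_play_elim hB' (hhead u hu) (hhead v hvT) hH hNC hC
      have hS0 : [p (0 + 1), g] ∈ rest' := by
        have h := hstk 0
        rwa [hp0] at h
      have hS0B : [p (0 + 1), g] ∈ B := by
        rw [hB']
        exact Multiset.mem_cons_of_mem (Multiset.mem_cons_of_mem hS0)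
      by_cases hz : p (0 + 1) = g
      · rw [hz] at hS0B
        have hT : [g, g] ∈ T := Multiset.mem_filter.mpr ⟨hS0B, rfl⟩
        have := hall1 _ hT
        simp [List.count_cons] at this
      · have hmt' : [p (0 + 1), g] ∈ B.filter (fun s => ¬ s.head? = some g) :=
          Multiset.mem_filter.mpr ⟨hS0B, by simpa using hz⟩
        have hle := count_le_tileCount hmt' g
        have hcg : 1 ≤ List.count g [p (0 + 1), g] := count_snd_pos g _
        omega

lemma solvable_of_no_cycle :
    ∀ (n : ℕ) (B : Board G), totalTiles B = n → HeightsOK B →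
      (∀ g : G, tileCount B g = 0 ∨ tileCount B g = 2 ∨ tileCount B g = 4) →
      ¬ HasBlockedCycle B → Solvable B := by
  intro n
  induction n using Nat.strong_induction_on with
  | _ n ih =>
    intro B hTn hH hs hNC
    by_cases hB0 : B = 0
    · subst hB0; exact Relation.ReflTransGen.refl
    · obtain ⟨g, u, v, rest', hB', hu, hv, hNC'⟩ := exists_safe_move B hH hs hB0 hNC
      have htt : totalTiles (play u v rest') + 2 = totalTiles B := by
        rw [hB']; exact totalTiles_play hu hv
      have hH' : HeightsOK (play u v rest') := heightsOK_play hH hB'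
      have hs' : ∀ q : G, tileCount (play u v rest') q = 0 ∨
          tileCount (play u v rest') q = 2 ∨ tileCount (play u v rest') q = 4 := by
        intro q
        by_cases hq : q = g
        · subst hq
          have h := tileCount_play_self hu hv (rest := rest')
          rw [← hB'] at h
          rcases hs q with h1 | h1 | h1 <;> omega
        · have h := tileCount_play_ne hu hv hq (rest := rest')
          rw [← hB'] at h
          rw [h]
          exact hs q
      have hsolv' : Solvable (play u v rest') :=
        ih (totalTiles (play u v rest')) (by omega) _ rfl hH' hs' hNC'
      exact Relation.ReflTransGen.head ⟨g, u, v, rest', hB', hu, hv, rfl⟩ hsolv'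

/-- with stacks of heights one and two and all groups of size two
or four, the board is solvable iff no blocked cycle is present. -/
theorem stmt2 (B : Board G) (hH : HeightsOK B)
    (hs : ∀ g : G, tileCount B g = 0 ∨ tileCount B g = 2 ∨ tileCount B g = 4) :
    Solvable B ↔ ¬ HasBlockedCycle B :=
  ⟨no_cycle_of_solvable, fun h => solvable_of_no_cycle (totalTiles B) B rfl hH hs h⟩
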